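/- Glivenko's theorem: for all finite sets of propositional formulas Γ and formulas φ, Γ is classically derivable of φ if and only if Γ intuitionistically derives ¬¬φ: Γ ⊢_c φ ⟺ Γ ⊢_i ¬¬φ. -/
import Mathlib


/-- A single-conclusion entailment relation on `S`. -/
structure IsEntailment {S : Type*} [DecidableEq S] (E : Finset S → S → Prop) : Prop where
  refl : ∀ (U : Finset S) (a : S), a ∈ U → E U a
  mono : ∀ (U U' : Finset S) (a : S), E U a → E (U ∪ U') a
  cut : ∀ (V V' : Finset S) (a b : S), E V b → E (insert b V') a → E (V ∪ V') a

/-- A nucleus over an entailment relation. -/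
structure IsNucleus {S : Type*} [DecidableEq S] (E : Finset S → S → Prop) (j : S → S) : Prop where
  lj : ∀ (U : Finset S) (a b : S), E (insert a U) (j b) → E (insert (j a) U) (j b)
  rj : ∀ (U : Finset S) (b : S), E U b → E U (j b)

/-- Propositional formulas over countably many atoms. -/
inductive Fml where
  | atom : ℕ → Fml
  | top : Fml
  | bot : Fml
  | and : Fml → Fml → Fml
  | or : Fml → Fml → Fml
  | imp : Fml → Fml → Fml
  | neg : Fml → Fml
deriving DecidableEq

/-- Generators of positive propositional logic: an entailment relation closed
under the deduction rule R→ and the standard axioms for ∧, ∨, →, ⊤. -/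
structure PosGen (E : Finset Fml → Fml → Prop) : Prop where
  ent : IsEntailment E
  rimp : ∀ (Γ : Finset Fml) (φ ψ : Fml), E (insert φ Γ) ψ → E Γ (φ.imp ψ)
  andI : ∀ φ ψ : Fml, E {φ, ψ} (φ.and ψ)
  andE1 : ∀ φ ψ : Fml, E {φ.and ψ} φ
  andE2 : ∀ φ ψ : Fml, E {φ.and ψ} ψ
  orI1 : ∀ φ ψ : Fml, E {φ} (φ.or ψ)
  orI2 : ∀ φ ψ : Fml, E {ψ} (φ.or ψ)
  orE : ∀ φ ψ δ : Fml, E {φ.or ψ, φ.imp δ, ψ.imp δ} δ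
  mp : ∀ φ ψ : Fml, E {φ, φ.imp ψ} ψ
  topI : E ∅ Fml.top

/-- Generators of minimal logic: positive logic plus `¬φ ≈ φ → ⊥`. -/
structure MinGen (E : Finset Fml → Fml → Prop) extends PosGen E : Prop where
  pc1 : ∀ φ : Fml, E {φ.imp .bot} φ.neg
  pc2 : ∀ φ : Fml, E {φ.neg} (φ.imp .bot)

/-- Generators of intuitionistic logic: minimal logic plus ex falso quodlibet. -/
structure IntGen (E : Finset Fml → Fml → Prop) extends MinGen E : Prop where
  efq : ∀ φ : Fml, E {Fml.bot} φ

/-- Generators of classical logic: intuitionistic logic plus reductio ad absurdum. -/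
structure ClGen (E : Finset Fml → Fml → Prop) extends IntGen E : Prop where
  raa : ∀ φ : Fml, E {φ.neg.neg} φ

/-- Minimal propositional logic `⊢_m`. -/
def MinD (Γ : Finset Fml) (φ : Fml) : Prop :=
  ∀ E : Finset Fml → Fml → Prop, MinGen E → E Γ φ

/-- Intuitionistic propositional logic `⊢_i`. -/
def IntD (Γ : Finset Fml) (φ : Fml) : Prop :=
  ∀ E : Finset Fml → Fml → Prop, IntGen E → E Γ φ

/-- Classical propositional logic `⊢_c`. -/
def ClD (Γ : Finset Fml) (φ : Fml) : Prop :=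
  ∀ E : Finset Fml → Fml → Prop, ClGen E → E Γ φ

namespace GlivenkoAux

variable {E : Finset Fml → Fml → Prop}

lemma wk (hE : IntGen E) {U V : Finset Fml} {a : Fml} (h : E U a) (hs : U ⊆ V) : E V a := by
  have := hE.ent.mono U V a h
  rwa [Finset.union_eq_right.mpr hs] at this

lemma cutΓ (hE : IntGen E) {Γ : Finset Fml} {a b : Fml} (h1 : E Γ b)
    (h2 : E (insert b Γ) a) : E Γ a := by
  have := hE.ent.cut Γ Γ a b h1 h2
  rwa [Finset.union_self] at this

lemma mp2 (hE : IntGen E) {Γ : Finset Fml} {φ ψ : Fml} (h1 : E Γ (φ.imp ψ))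
    (h2 : E Γ φ) : E Γ ψ := by
  apply cutΓ hE h2
  apply cutΓ hE (wk hE h1 (Finset.subset_insert _ _))
  exact wk hE (hE.mp φ ψ) (by intro x hx; simp at hx ⊢; tauto)

lemma ofSingle (hE : IntGen E) {Γ : Finset Fml} {a b : Fml} (h1 : E {b} a)
    (h2 : E Γ b) : E Γ a :=
  cutΓ hE h2 (wk hE h1 (by intro x hx; simp at hx ⊢; tauto))

lemma negI (hE : IntGen E) {Γ : Finset Fml} {φ : Fml} (h : E (insert φ Γ) .bot) :
    E Γ φ.neg :=
  ofSingle hE (hE.pc1 φ) (hE.rimp Γ φ .bot h)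

lemma negE (hE : IntGen E) {Γ : Finset Fml} {φ : Fml} (h1 : E Γ φ.neg) (h2 : E Γ φ) :
    E Γ .bot :=
  mp2 hE (ofSingle hE (hE.pc2 φ) h1) h2

lemma dni (hE : IntGen E) {Γ : Finset Fml} {φ : Fml} (h : E Γ φ) : E Γ φ.neg.neg :=
  negI hE (negE hE (hE.ent.refl _ _ (by simp)) (wk hE h (Finset.subset_insert _ _)))

lemma cutNN (hE : IntGen E) {V V' : Finset Fml} {a b : Fml} (h1 : E V b.neg.neg)
    (h2 : E (insert b V') a.neg.neg) : E (V ∪ V') a.neg.neg := by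
  have hb : E (V ∪ V') b.neg.neg := wk hE h1 Finset.subset_union_left
  have himp : E (V ∪ V') (b.imp a.neg.neg) :=
    wk hE (hE.rimp V' b _ h2) Finset.subset_union_right
  apply negI hE
  have hbneg : E (insert a.neg (V ∪ V')) b.neg := by
    apply negI hE
    have hb' : E (insert b (insert a.neg (V ∪ V'))) b := hE.ent.refl _ _ (by simp)
    have hnn : E (insert b (insert a.neg (V ∪ V'))) a.neg.neg :=
      mp2 hE (wk hE himp (by intro x hx; simp at hx ⊢; tauto)) hb'
    exact negE hE hnn (hE.ent.refl _ _ (by simp))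
  exact negE hE (wk hE hb (Finset.subset_insert _ _)) hbneg

lemma rimpNN (hE : IntGen E) {Γ : Finset Fml} {φ ψ : Fml}
    (h : E (insert φ Γ) ψ.neg.neg) : E Γ (φ.imp ψ).neg.neg := by
  have himp : E Γ (φ.imp ψ.neg.neg) := hE.rimp _ _ _ h
  apply negI hE
  set Δ := insert (φ.imp ψ).neg Γ with hΔ
  have hmemΔ : (φ.imp ψ).neg ∈ Δ := by simp [hΔ]
  have hnψ : E Δ ψ.neg := by
    apply negI hE
    have h1 : E (insert ψ Δ) (φ.imp ψ) :=
      hE.rimp _ _ _ (hE.ent.refl _ _ (by simp))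
    exact negE hE (hE.ent.refl _ _ (by simp [hΔ])) h1
  have hnnφ : E Δ φ.neg.neg := by
    apply negI hE
    have h1 : E (insert φ.neg Δ) (φ.imp ψ) := by
      apply hE.rimp
      have hbot : E (insert φ (insert φ.neg Δ)) Fml.bot :=
        negE (φ := φ) hE (hE.ent.refl _ _ (by simp)) (hE.ent.refl _ _ (by simp))
      exact ofSingle hE (hE.efq ψ) hbot
    exact negE hE (hE.ent.refl _ _ (by simp [hΔ])) h1
  have hnφ : E Δ φ.neg := by
    apply negI hE
    have h1 : E (insert φ Δ) ψ.neg.neg :=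
      mp2 hE (wk hE himp (by intro x hx; simp [hΔ]; tauto)) (hE.ent.refl _ _ (by simp))
    exact negE hE h1 (wk hE hnψ (Finset.subset_insert _ _))
  exact negE hE hnnφ hnφ

lemma clGenNN (hE : IntGen E) : ClGen (fun U a => E U a.neg.neg) where
  ent := {
    refl := fun U a ha => dni hE (hE.ent.refl U a ha)
    mono := fun U U' a h => wk hE h Finset.subset_union_left
    cut := fun V V' a b h1 h2 => cutNN hE h1 h2 }
  rimp := fun Γ φ ψ h => rimpNN hE h
  andI := fun φ ψ => dni hE (hE.andI φ ψ)
  andE1 := fun φ ψ => dni hE (hE.andE1 φ ψ)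
  andE2 := fun φ ψ => dni hE (hE.andE2 φ ψ)
  orI1 := fun φ ψ => dni hE (hE.orI1 φ ψ)
  orI2 := fun φ ψ => dni hE (hE.orI2 φ ψ)
  orE := fun φ ψ δ => dni hE (hE.orE φ ψ δ)
  mp := fun φ ψ => dni hE (hE.mp φ ψ)
  topI := dni hE hE.topI
  pc1 := fun φ => dni hE (hE.pc1 φ)
  pc2 := fun φ => dni hE (hE.pc2 φ)
  efq := fun φ => dni hE (hE.efq φ)
  raa := fun φ => hE.ent.refl _ _ (by simp)

end GlivenkoAux

/-- Glivenko's theorem: `Γ ⊢_c φ ↔ Γ ⊢_i ¬¬φ`. -/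
theorem glivenko (Γ : Finset Fml) (φ : Fml) :
    ClD Γ φ ↔ IntD Γ φ.neg.neg := by
  constructor
  · intro h E hE
    exact h (fun U a => E U a.neg.neg) (GlivenkoAux.clGenNN hE)
  · intro h E hE
    have h1 : E Γ φ.neg.neg := h E hE.toIntGen
    have h2 := hE.raa φ
    have := hE.ent.cut Γ ∅ φ φ.neg.neg h1
      (GlivenkoAux.wk hE.toIntGen h2 (by intro x hx; simp at hx ⊢; tauto))
    rwa [Finset.union_empty] at this
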